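/- Let t ≥ 2, let d ∈ F_q, and suppose there exists a 2t×2t matrix E = (E_1, E_2) over F_q with t-column blocks E_1, E_2 such that: (1) E_1, E_2, E_1+E_2, E_1−E_2 each have all sets of t rows linearly independent; and (2) the matrices E, (E_1, E_1+dE_2), (E_2, E_1+dE_2), (E_1+E_2, E_1+dE_2), (E_1−E_2, E_1+dE_2) are all nonsingular. Then there exists a q^t-CMS(q^t, t). -/

import Mathlib

open Finset

/-- An orthogonal array of strength `t` with `k` rows (constraints), columns indexed
by `ι`, symbols in `α`, and index `lam`: in every choice of `t` distinct rows,
every `t`-tuple of symbols appears in exactly `lam` columns. -/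
def IsOAOn {α ι : Type*} [Fintype α] [DecidableEq α] [Fintype ι] {k : ℕ} (t : ℕ)
    (A : Fin k → ι → α) (lam : ℕ) : Prop :=
  ∀ rows : Fin t → Fin k, Function.Injective rows → ∀ x : Fin t → α,
    (Finset.univ.filter fun c : ι => ∀ i, A (rows i) c = x i).card = lam

/-- An array is simple if no two of its columns are identical. -/
def IsSimpleArr {α ι : Type*} {k : ℕ} (A : Fin k → ι → α) : Prop :=
  Function.Injective fun c : ι => fun i => A i c

/-- A large set of orthogonal arrays: a family (indexed by `σ`) of simple OAs of
strength `t` and index `lam` such that every `k`-tuple of symbols occurs as a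
column of exactly one array of the family. -/
def IsLOAOn {α ι σ : Type*} [Fintype α] [DecidableEq α] [Fintype ι] {k : ℕ} (t : ℕ)
    (A : σ → Fin k → ι → α) (lam : ℕ) : Prop :=
  (∀ s, IsOAOn t (A s) lam ∧ IsSimpleArr (A s)) ∧
  ∀ x : Fin k → α, ∃! p : σ × ι, (fun i => A p.1 i p.2) = x

/-- A strong double large set of orthogonal arrays `SDLOA(N; t, k, v)`:
the family `A_0, …, A_{N-1}` is an LOA, the derived arrays `B_j`
(whose `s`-th column is the `j`-th column of `A_s`) form an LOA, and the arrays
`D` (`j`-th column = `j`-th column of `A_j`) and `D'` (`j`-th column =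
`(N-1-j)`-th column of `A_j`) are both OAs. -/
def IsSDLOA {α : Type*} [Fintype α] [DecidableEq α] {k N : ℕ} (t : ℕ)
    (A : Fin N → Fin k → Fin N → α) (lam : ℕ) : Prop :=
  IsLOAOn t A lam ∧
  IsLOAOn t (fun (j : Fin N) (i : Fin k) (s : Fin N) => A s i j) lam ∧
  IsOAOn t (fun (i : Fin k) (j : Fin N) => A j i j) lam ∧
  IsOAOn t (fun (i : Fin k) (j : Fin N) => A j i (Fin.rev j)) lam

/-- A `t`-multimagic square of order `n`: an `n × n` matrix whose entries are the
consecutive integers `0, …, n^2 - 1` and such that, for every `1 ≤ e ≤ t`,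
the entrywise `e`-th power has equal row sums, column sums, and sums on both
diagonals. -/
def IsMultimagic (n t : ℕ) (M : Fin n → Fin n → ℕ) : Prop :=
  (∀ i j, M i j < n ^ 2) ∧
  (Function.Injective fun p : Fin n × Fin n => M p.1 p.2) ∧
  ∀ e, 1 ≤ e → e ≤ t → ∃ S,
    (∀ i, ∑ j, (M i j) ^ e = S) ∧ (∀ j, ∑ i, (M i j) ^ e = S) ∧
    (∑ i, (M i i) ^ e = S) ∧ (∑ i, (M i (Fin.rev i)) ^ e = S)

/-- A set of `m` complementary `t`-multimagic squares of order `n`, `m`-CMS(`n`,`t`):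
`m` multimagic squares such that summing the `(t+1)`-st powers of the entries over
all `m` squares along any fixed row, any fixed column, or either diagonal always
gives `m · S_{t+1}(n)` (the conditions are stated multiplied through by `n`). -/
def IsCMS (m n t : ℕ) (B : Fin m → Fin n → Fin n → ℕ) : Prop :=
  (∀ s, IsMultimagic n t (B s)) ∧
  (∀ i, n * ∑ s, ∑ j, (B s i j) ^ (t + 1) = m * ∑ k ∈ Finset.range (n ^ 2), k ^ (t + 1)) ∧
  (∀ j, n * ∑ s, ∑ i, (B s i j) ^ (t + 1) = m * ∑ k ∈ Finset.range (n ^ 2), k ^ (t + 1)) ∧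
  (n * ∑ s, ∑ i, (B s i i) ^ (t + 1) = m * ∑ k ∈ Finset.range (n ^ 2), k ^ (t + 1)) ∧
  (n * ∑ s, ∑ i, (B s i (Fin.rev i)) ^ (t + 1) = m * ∑ k ∈ Finset.range (n ^ 2), k ^ (t + 1))

/-- Any `t` rows of the matrix `M` are linearly independent. -/
def RowsIndep {F : Type*} [Field F] {m' : Type*} {s : ℕ} (t : ℕ)
    (M : Matrix m' (Fin s) F) : Prop :=
  ∀ rows : Fin t → m', Function.Injective rows → LinearIndependent F fun i => M (rows i)

/-- The block matrix `(A, B)` (with `A, B` of the same shape) is nonsingular, phrased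
via bijectivity of the associated linear map. -/
def NonsingularPair {F : Type*} [Field F] {m' : Type*} {s : ℕ}
    (A B : Matrix m' (Fin s) F) : Prop :=
  Function.Bijective fun p : (Fin s → F) × (Fin s → F) => A.mulVec p.1 + B.mulVec p.2

/-- If `t ≥ 2`, `d ∈ F_q`, and `E = (E₁, E₂)` over `F_q` satisfies the
row-independence conditions for `E₁, E₂, E₁+E₂, E₁-E₂` and the nonsingularity of the
five matrices `E`, `(E₁, E₁+dE₂)`, `(E₂, E₁+dE₂)`, `(E₁+E₂, E₁+dE₂)`,
`(E₁-E₂, E₁+dE₂)`, then there exists a q^t-CMS(q^t, t). -/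


noncomputable def digEquiv (F : Type) [Fintype F] [DecidableEq F] (n : ℕ) :
    (Fin n → F) ≃ Fin (Fintype.card F ^ n) :=
  (Equiv.arrowCongr (Equiv.refl (Fin n)) (Fintype.equivFin F)).trans finFunctionFinEquiv

noncomputable def encF (F : Type) [Fintype F] [DecidableEq F] {n : ℕ} (w : Fin n → F) : ℕ :=
  (digEquiv F n w : ℕ)

variable {F : Type} [Fintype F] [DecidableEq F]

lemma encF_lt {n : ℕ} (w : Fin n → F) : encF F w < Fintype.card F ^ n :=
  (digEquiv F n w).isLt

lemma encF_inj {n : ℕ} : Function.Injective (encF F (n := n)) :=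
  Fin.val_injective.comp (digEquiv F n).injective

lemma encF_apply {n : ℕ} (w : Fin n → F) :
    encF F w = ∑ k : Fin n, ((Fintype.equivFin F) (w k) : ℕ) * (Fintype.card F) ^ (k : ℕ) := by
  have : digEquiv F n w = finFunctionFinEquiv (fun k => (Fintype.equivFin F) (w k)) := by
    simp [digEquiv, Equiv.arrowCongr]
    rfl
  rw [encF, this, finFunctionFinEquiv_apply]

lemma encF_total (n e : ℕ) :
    ∑ w : Fin n → F, (encF F w) ^ e = ∑ k ∈ Finset.range (Fintype.card F ^ n), k ^ e := by
  rw [← Fin.sum_univ_eq_sum_range (fun k => k ^ e)]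
  exact Equiv.sum_comp (digEquiv F n) (fun j => (j : ℕ) ^ e)

variable {F : Type} [Field F] [Fintype F] [DecidableEq F]


lemma cylinder_sum {t : ℕ} (r : Fin t → Fin (2 * t)) (hr : Function.Injective r)
    (G : (Fin t → F) → ℕ) :
    ∑ w : Fin (2 * t) → F, G (w ∘ r) = Fintype.card F ^ t * ∑ u : Fin t → F, G u := by
  classical
  set s : Finset (Fin (2 * t)) := (Finset.univ.image r)ᶜ with hs
  have hcard : s.card = t := by
    rw [hs, Finset.card_compl, Finset.card_image_of_injective _ hr]
    simp; omega
  let e2 : s ≃ Fin t := s.equivFinOfCardEq hcard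
  let f : Fin t ⊕ Fin t → Fin (2 * t) := Sum.elim r (fun i => (e2.symm i : Fin (2 * t)))
  have hfinj : Function.Injective f := by
    intro a b hab
    match a, b with
    | Sum.inl a, Sum.inl b => exact congrArg Sum.inl (hr hab)
    | Sum.inr a, Sum.inr b =>
      exact congrArg Sum.inr (e2.symm.injective (Subtype.val_injective hab))
    | Sum.inl a, Sum.inr b =>
      exfalso
      simp only [f, Sum.elim_inl, Sum.elim_inr] at hab
      have h1 : r a ∈ Finset.univ.image r := Finset.mem_image_of_mem _ (Finset.mem_univ a)
      have h2 : (e2.symm b : Fin (2 * t)) ∈ s := (e2.symm b).2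
      simp only [hs, Finset.mem_compl] at h2
      rw [← hab] at h2
      exact h2 h1
    | Sum.inr a, Sum.inl b =>
      exfalso
      simp only [f, Sum.elim_inl, Sum.elim_inr] at hab
      have h1 : r b ∈ Finset.univ.image r := Finset.mem_image_of_mem _ (Finset.mem_univ b)
      have h2 : (e2.symm a : Fin (2 * t)) ∈ s := (e2.symm a).2
      simp only [hs, Finset.mem_compl] at h2
      rw [hab] at h2
      exact h2 h1
  have hfbij : Function.Bijective f := by
    rw [Fintype.bijective_iff_injective_and_card]
    refine ⟨hfinj, by simp; omega⟩
  let ε : Fin t ⊕ Fin t ≃ Fin (2 * t) := Equiv.ofBijective f hfbij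
  let η : (Fin (2 * t) → F) ≃ (Fin t ⊕ Fin t → F) :=
    Equiv.arrowCongr ε.symm (Equiv.refl F)
  have step1 : ∑ w : Fin (2 * t) → F, G (w ∘ r)
      = ∑ p : Fin t ⊕ Fin t → F, G (p ∘ Sum.inl) := by
    refine Fintype.sum_equiv η _ _ (fun w => ?_)
    congr 1
  rw [step1]
  have step2 : ∑ p : Fin t ⊕ Fin t → F, G (p ∘ Sum.inl)
      = ∑ q : (Fin t → F) × (Fin t → F), G q.1 := by
    exact Fintype.sum_equiv (Equiv.sumArrowEquivProdArrow _ _ F) _ _ (fun p => rfl)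
  rw [step2, Fintype.sum_prod_type]
  simp only [Finset.sum_const, smul_eq_mul, Finset.card_univ]
  rw [← Finset.mul_sum]
  congr 1
  simp [Fintype.card_fun]

lemma affine_bij {t : ℕ} (M : Matrix (Fin (2 * t)) (Fin t) F) (hM : RowsIndep t M)
    (r : Fin t → Fin (2 * t)) (hr : Function.Injective r) (b : Fin (2 * t) → F) :
    Function.Bijective (fun x : Fin t → F => ((M.mulVec x + b) ∘ r)) := by
  classical
  have h1 : LinearIndependent F (fun i => (M.submatrix r id) i) := by
    have := hM r hr
    convert this using 1
    rfl
  have hunit : IsUnit (M.submatrix r id) := Matrix.linearIndependent_rows_iff_isUnit.mp h1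
  have hbij : Function.Bijective (M.submatrix r id).mulVec :=
    ⟨Matrix.mulVec_injective_iff_isUnit.mpr hunit, Matrix.mulVec_surjective_iff_isUnit.mpr hunit⟩
  have heq : (fun x : Fin t → F => ((M.mulVec x + b) ∘ r))
      = (fun y => y + b ∘ r) ∘ (M.submatrix r id).mulVec := by
    funext x; funext i
    simp [Matrix.mulVec, Matrix.submatrix, Function.comp]
  rw [heq]
  exact (Equiv.addRight (b ∘ r)).bijective.comp hbij

lemma exists_extend {t e : ℕ} (he : e ≤ t) (g : Fin e → Fin (2 * t)) :
    ∃ r : Fin t → Fin (2 * t), Function.Injective r ∧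
      ∃ σ : Fin e → Fin t, ∀ m, r (σ m) = g m := by
  classical
  have hsub : (Finset.univ.image g).card ≤ t :=
    le_trans (Finset.card_image_le.trans (by simp)) he
  obtain ⟨T, hT, hTcard⟩ := Finset.exists_superset_card_eq hsub (by simp; omega)
  let e2 : T ≃ Fin t := T.equivFinOfCardEq hTcard
  refine ⟨fun i => (e2.symm i : Fin (2 * t)), ?_, ?_⟩
  · intro a b hab
    exact e2.symm.injective (Subtype.val_injective hab)
  · refine ⟨fun m => e2 ⟨g m, hT (Finset.mem_image_of_mem _ (Finset.mem_univ m))⟩, fun m => ?_⟩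
    simp


lemma key_sum {t : ℕ} (e : ℕ) (he : e ≤ t) (M : Matrix (Fin (2 * t)) (Fin t) F)
    (hM : RowsIndep t M) (b : Fin (2 * t) → F) :
    Fintype.card F ^ t * ∑ x : Fin t → F, (encF F (M.mulVec x + b)) ^ e
      = ∑ w : Fin (2 * t) → F, (encF F w) ^ e := by
  classical
  have expand : ∀ w : Fin (2 * t) → F, (encF F w) ^ e
      = ∑ g : Fin e → Fin (2 * t), ∏ m : Fin e,
          ((Fintype.equivFin F) (w (g m)) : ℕ) * Fintype.card F ^ ((g m) : ℕ) := by
    intro w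
    have h1 : (∑ k : Fin (2 * t), ((Fintype.equivFin F) (w k) : ℕ) * Fintype.card F ^ (k : ℕ)) ^ e
        = ∏ _m : Fin e, (∑ k : Fin (2 * t),
            ((Fintype.equivFin F) (w k) : ℕ) * Fintype.card F ^ (k : ℕ)) := by
      simp [Finset.prod_const]
    rw [encF_apply, h1, Finset.prod_univ_sum, Fintype.piFinset_univ]
  have main : ∀ g : Fin e → Fin (2 * t),
      ∑ w : Fin (2 * t) → F, ∏ m : Fin e,
          ((Fintype.equivFin F) (w (g m)) : ℕ) * Fintype.card F ^ ((g m) : ℕ)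
      = Fintype.card F ^ t * ∑ x : Fin t → F, ∏ m : Fin e,
          ((Fintype.equivFin F) ((M.mulVec x + b) (g m)) : ℕ) * Fintype.card F ^ ((g m) : ℕ) := by
    intro g
    obtain ⟨r, hr, σ, hrσ⟩ := exists_extend he g
    set G : (Fin t → F) → ℕ :=
      fun u => ∏ m : Fin e, ((Fintype.equivFin F) (u (σ m)) : ℕ) * Fintype.card F ^ ((g m) : ℕ) with hG
    have hw : ∀ w : Fin (2 * t) → F,
        (∏ m : Fin e, ((Fintype.equivFin F) (w (g m)) : ℕ) * Fintype.card F ^ ((g m) : ℕ)) = G (w ∘ r) := by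
      intro w
      rw [hG]
      refine Finset.prod_congr rfl (fun m _ => ?_)
      rw [Function.comp_apply, hrσ m]
    calc ∑ w : Fin (2 * t) → F, ∏ m : Fin e,
            ((Fintype.equivFin F) (w (g m)) : ℕ) * Fintype.card F ^ ((g m) : ℕ)
        = ∑ w : Fin (2 * t) → F, G (w ∘ r) := by
          exact Finset.sum_congr rfl (fun w _ => hw w)
      _ = Fintype.card F ^ t * ∑ u : Fin t → F, G u := cylinder_sum r hr G
      _ = Fintype.card F ^ t * ∑ x : Fin t → F, G ((M.mulVec x + b) ∘ r) := by
          rw [(affine_bij M hM r hr b).sum_comp G]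
      _ = Fintype.card F ^ t * ∑ x : Fin t → F, ∏ m : Fin e,
            ((Fintype.equivFin F) ((M.mulVec x + b) (g m)) : ℕ) * Fintype.card F ^ ((g m) : ℕ) := by
          congr 1
          exact Finset.sum_congr rfl (fun x _ => (hw _).symm)
  calc Fintype.card F ^ t * ∑ x : Fin t → F, (encF F (M.mulVec x + b)) ^ e
      = Fintype.card F ^ t * ∑ x : Fin t → F, ∑ g : Fin e → Fin (2 * t), ∏ m : Fin e,
          ((Fintype.equivFin F) ((M.mulVec x + b) (g m)) : ℕ) * Fintype.card F ^ ((g m) : ℕ) := by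
        congr 1; exact Finset.sum_congr rfl (fun x _ => expand _)
    _ = ∑ g : Fin e → Fin (2 * t), Fintype.card F ^ t * ∑ x : Fin t → F, ∏ m : Fin e,
          ((Fintype.equivFin F) ((M.mulVec x + b) (g m)) : ℕ) * Fintype.card F ^ ((g m) : ℕ) := by
        rw [Finset.sum_comm, Finset.mul_sum]
    _ = ∑ g : Fin e → Fin (2 * t), ∑ w : Fin (2 * t) → F, ∏ m : Fin e,
          ((Fintype.equivFin F) (w (g m)) : ℕ) * Fintype.card F ^ ((g m) : ℕ) := by
        exact Finset.sum_congr rfl (fun g _ => (main g).symm)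
    _ = ∑ w : Fin (2 * t) → F, (encF F w) ^ e := by
        rw [Finset.sum_comm]
        exact Finset.sum_congr rfl (fun w _ => (expand w).symm)


lemma cycleType_of_inv {α : Type*} [Fintype α] [DecidableEq α] (σ : Equiv.Perm α)
    (h : ∀ x, σ (σ x) = x) :
    σ.cycleType = Multiset.replicate (σ.support.card / 2) 2 := by
  have hsq : σ * σ = 1 := by
    ext x; simp [Equiv.Perm.mul_apply, h]
  have hrep : σ.cycleType = Multiset.replicate σ.cycleType.card 2 := by
    rw [Multiset.eq_replicate_card]
    intro n hn
    have h2 : 2 ≤ n := Equiv.Perm.two_le_of_mem_cycleType hn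
    have hd : n ∣ orderOf σ := Equiv.Perm.dvd_of_mem_cycleType hn
    have ho : orderOf σ ∣ 2 := orderOf_dvd_of_pow_eq_one (by rw [pow_two]; exact hsq)
    have hn2 : n ∣ 2 := hd.trans ho
    have := Nat.le_of_dvd (by norm_num) hn2
    omega
  have hsum := Equiv.Perm.sum_cycleType σ
  rw [hrep, Multiset.sum_replicate, smul_eq_mul] at hsum
  rw [hrep]
  congr 1
  omega

lemma conj_involutions {α β : Type*} [Fintype α] [DecidableEq α] [Fintype β] [DecidableEq β]
    (σ : Equiv.Perm α) (τ : Equiv.Perm β) (hσ : ∀ x, σ (σ x) = x) (hτ : ∀ x, τ (τ x) = x)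
    (e0 : α ≃ β) (hsupp : σ.support.card = τ.support.card) :
    ∃ e : α ≃ β, ∀ a, e (σ a) = τ (e a) := by
  classical
  let τ' : Equiv.Perm α := e0.trans (τ.trans e0.symm)
  have hτ'app : ∀ x, τ' x = e0.symm (τ (e0 x)) := fun x => rfl
  have hτ' : ∀ x, τ' (τ' x) = x := by
    intro x; simp [hτ'app, hτ]
  have hsupp' : τ'.support.card = τ.support.card := by
    refine Finset.card_bij (fun a _ => e0 a) ?_ ?_ ?_
    · intro a ha
      simp only [Equiv.Perm.mem_support, hτ'app] at ha ⊢
      intro hc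
      exact ha (by rw [hc]; simp)
    · intro a _ b _ hab; exact e0.injective hab
    · intro b hb
      refine ⟨e0.symm b, ?_, by simp⟩
      simp only [Equiv.Perm.mem_support, hτ'app] at hb ⊢
      simp only [Equiv.apply_symm_apply]
      intro hc
      exact hb (by simpa using congrArg e0 hc)
  have hct : σ.cycleType = τ'.cycleType := by
    rw [cycleType_of_inv σ hσ, cycleType_of_inv τ' hτ', hsupp', hsupp]
  obtain ⟨c, hc⟩ := isConj_iff.mp (Equiv.Perm.isConj_of_cycleType_eq hct)
  refine ⟨Equiv.trans c e0, fun a => ?_⟩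
  have h1 : c (σ a) = τ' (c a) := by
    have := congrFun (congrArg (fun p : Equiv.Perm α => (p : α → α)) hc) (c a)
    simpa [Equiv.Perm.mul_apply] using this
  show e0 (c (σ a)) = τ (e0 (c a))
  rw [h1, hτ'app]
  simp


lemma exists_v (F : Type) [Field F] [Fintype F] [DecidableEq F] (t : ℕ) (ht : 1 ≤ t) :
    ∃ (c0 : F) (v : Fin (Fintype.card F ^ t) ≃ (Fin t → F)),
      ∀ j, v (Fin.rev j) = (fun _ => c0) - v j := by
  classical
  obtain ⟨n, hp, hcard⟩ := FiniteField.card F (ringChar F)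
  have hcardV : Fintype.card (Fin t → F) = Fintype.card F ^ t := by
    simp [Fintype.card_fun]
  refine ⟨if (2 : F) = 0 then 1 else 0, ?_⟩
  set c0 : F := if (2 : F) = 0 then 1 else 0 with hc0
  let σ : Equiv.Perm (Fin (Fintype.card F ^ t)) := Fin.revPerm
  let τ : Equiv.Perm (Fin t → F) := Equiv.subLeft (fun _ => c0)
  have hσinv : ∀ x, σ (σ x) = x := by intro x; simp [σ]
  have hτinv : ∀ x, τ (τ x) = x := by intro x; simp [τ]
  have hNpar : (Fintype.card F ^ t) % 2 = if (2 : F) = 0 then 0 else 1 := by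
    by_cases h2 : (2 : F) = 0
    · rw [if_pos h2]
      have hdvd : ringChar F ∣ 2 := (ringChar.spec F 2).mp (by exact_mod_cast h2)
      have hchar2 : ringChar F = 2 := (Nat.prime_dvd_prime_iff_eq hp Nat.prime_two).mp hdvd
      have : 2 ∣ Fintype.card F ^ t := by
        rw [hcard, hchar2]
        exact dvd_pow (dvd_pow_self 2 n.2.ne') (by omega)
      omega
    · rw [if_neg h2]
      have hchar : ringChar F ≠ 2 := by
        intro hc
        apply h2
        have : CharP F 2 := hc ▸ ringChar.charP F
        exact_mod_cast (CharP.cast_eq_zero F 2)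
      have hodd : Odd (ringChar F) := hp.odd_of_ne_two hchar
      have : Odd (Fintype.card F ^ t) := by
        rw [hcard]
        exact (hodd.pow).pow
      rw [Nat.odd_iff] at this
      omega
  have hfixσ : (Finset.univ.filter fun k : Fin (Fintype.card F ^ t) => σ k = k).card
      = (Fintype.card F ^ t) % 2 := by
    by_cases hN2 : (Fintype.card F ^ t) % 2 = 1
    · rw [hN2]
      have : (Finset.univ.filter fun k : Fin (Fintype.card F ^ t) => σ k = k)
          = {⟨(Fintype.card F ^ t) / 2, by omega⟩} := by
        ext k
        have hk := k.isLt
        simp only [Finset.mem_filter, Finset.mem_univ, true_and, Finset.mem_singleton, σ,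
          Fin.revPerm_apply, Fin.ext_iff, Fin.val_rev]
        omega
      rw [this, Finset.card_singleton]
    · have hN0 : (Fintype.card F ^ t) % 2 = 0 := by omega
      rw [hN0]
      have : (Finset.univ.filter fun k : Fin (Fintype.card F ^ t) => σ k = k) = ∅ := by
        ext k
        have hk := k.isLt
        simp only [Finset.mem_filter, Finset.mem_univ, true_and, Finset.notMem_empty,
          iff_false, σ, Fin.revPerm_apply, Fin.ext_iff, Fin.val_rev]
        omega
      rw [this, Finset.card_empty]
  have hfixτ : (Finset.univ.filter fun x : Fin t → F => τ x = x).card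
      = (Fintype.card F ^ t) % 2 := by
    by_cases h2 : (2 : F) = 0
    · rw [hNpar, if_pos h2]
      have : (Finset.univ.filter fun x : Fin t → F => τ x = x) = ∅ := by
        ext x
        simp only [Finset.mem_filter, Finset.mem_univ, true_and, Finset.notMem_empty, iff_false,
          τ, Equiv.subLeft_apply]
        intro hc
        have hc1 := congrFun hc ⟨0, ht⟩
        simp only [Pi.sub_apply] at hc1
        have hcc0 : c0 = 1 := by rw [hc0, if_pos h2]
        rw [hcc0] at hc1
        have h21 : (2 : F) * x ⟨0, ht⟩ = 1 := by
          rw [two_mul]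
          linear_combination -hc1
        rw [h2, zero_mul] at h21
        exact one_ne_zero h21.symm
      rw [this, Finset.card_empty]
    · rw [hNpar, if_neg h2]
      have hcc0 : c0 = 0 := by rw [hc0, if_neg h2]
      have : (Finset.univ.filter fun x : Fin t → F => τ x = x) = {0} := by
        ext x
        simp only [Finset.mem_filter, Finset.mem_univ, true_and, Finset.mem_singleton,
          τ, Equiv.subLeft_apply, hcc0]
        constructor
        · intro hc
          funext i
          have hci := congrFun hc i
          simp only [Pi.sub_apply, Pi.zero_apply] at hci ⊢
          have h20 : (2 : F) * x i = 0 := by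
            rw [two_mul]
            linear_combination -hci
          rcases mul_eq_zero.mp h20 with h | h
          · exact absurd h h2
          · exact h
        · intro hc
          rw [hc]
          funext i
          simp
      rw [this, Finset.card_singleton]
  have hsupp : σ.support.card = τ.support.card := by
    have e1 : σ.support = Finset.univ.filter fun k => ¬ σ k = k := by
      ext k; simp [Equiv.Perm.mem_support]
    have e2 : τ.support = Finset.univ.filter fun x => ¬ τ x = x := by
      ext x; simp [Equiv.Perm.mem_support]
    have h1 := Finset.card_filter_add_card_filter_not
      (s := (Finset.univ : Finset (Fin (Fintype.card F ^ t))))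
      (p := fun k => σ k = k)
    have h2 := Finset.card_filter_add_card_filter_not
      (s := (Finset.univ : Finset (Fin t → F)))
      (p := fun x => τ x = x)
    simp only [Finset.card_univ, hcardV, Fintype.card_fin] at h1 h2
    rw [e1, e2]
    omega
  obtain ⟨e, he⟩ := conj_involutions σ τ hσinv hτinv
    (Fintype.equivFinOfCardEq hcardV).symm hsupp
  exact ⟨e, fun j => by simpa [σ, τ] using he j⟩


theorem cms_of_matrix {F : Type} [Field F] [Fintype F] [DecidableEq F] {t : ℕ}
    (ht : 2 ≤ t) (d : F)
    (E1 E2 : Matrix (Fin (2 * t)) (Fin t) F)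
    (h1 : RowsIndep t E1) (h2 : RowsIndep t E2)
    (h3 : RowsIndep t (E1 + E2)) (h4 : RowsIndep t (E1 - E2))
    (n1 : NonsingularPair E1 E2)
    (n2 : NonsingularPair E1 (E1 + d • E2))
    (n3 : NonsingularPair E2 (E1 + d • E2))
    (n4 : NonsingularPair (E1 + E2) (E1 + d • E2))
    (n5 : NonsingularPair (E1 - E2) (E1 + d • E2)) :
    ∃ B : Fin (Fintype.card F ^ t) → Fin (Fintype.card F ^ t) → Fin (Fintype.card F ^ t) → ℕ,
      IsCMS (Fintype.card F ^ t) (Fintype.card F ^ t) t B := by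
  classical
  obtain ⟨c0, v, hv⟩ := exists_v F t (by omega)
  set E3 : Matrix (Fin (2 * t)) (Fin t) F := E1 + d • E2 with hE3
  set C0 : Fin t → F := fun _ => c0 with hC0
  set L : (Fin t → F) → (Fin t → F) → (Fin t → F) → (Fin (2 * t) → F) :=
    fun s x y => E1.mulVec x + E2.mulVec y + E3.mulVec s with hL
  have hN0 : 0 < Fintype.card F ^ t := pow_pos Fintype.card_pos t
  have hNN : Fintype.card F ^ (2 * t) = (Fintype.card F ^ t) ^ 2 := by
    rw [Nat.mul_comm, pow_mul]
  have encTot : ∀ e : ℕ, ∑ w : Fin (2 * t) → F, (encF F w) ^ e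
      = ∑ k ∈ Finset.range ((Fintype.card F ^ t) ^ 2), k ^ e := by
    intro e
    rw [encF_total, hNN]
  -- rearrangement identities
  have hL1 : ∀ s' x y, L s' x y = E1.mulVec x + (E2.mulVec y + E3.mulVec s') := by
    intro s' x y; simp only [hL]; abel
  have hL2 : ∀ s' x y, L s' x y = E2.mulVec y + (E1.mulVec x + E3.mulVec s') := by
    intro s' x y; simp only [hL]; abel
  have hLd : ∀ s' x, L s' x x = (E1 + E2).mulVec x + E3.mulVec s' := by
    intro s' x; simp only [hL, Matrix.add_mulVec]; try abel
  have hLb : ∀ s' x, L s' x (C0 - x)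
      = (E1 - E2).mulVec x + (E2.mulVec C0 + E3.mulVec s') := by
    intro s' x
    simp only [hL, Matrix.sub_mulVec, Matrix.mulVec_sub]
    abel
  have cancel : ∀ X Y : ℕ,
      Fintype.card F ^ t * X = Fintype.card F ^ t * Y → X = Y :=
    fun X Y h => Nat.eq_of_mul_eq_mul_left (pow_pos Fintype.card_pos t) h
  refine ⟨fun s i j => encF F (L (v s) (v i) (v j)), ?_, ?_, ?_, ?_, ?_⟩
  · -- each square is multimagic
    intro s
    refine ⟨?_, ?_, ?_⟩
    · intro i j
      rw [← hNN]
      exact encF_lt _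
    · intro p p' hpp
      have h := encF_inj hpp
      simp only [hL] at h
      have h' := add_right_cancel h
      have hpair : ((v p.1 : Fin t → F), (v p.2 : Fin t → F))
          = ((v p'.1 : Fin t → F), (v p'.2 : Fin t → F)) := n1.injective h'
      have hp1 : (v p.1 : Fin t → F) = v p'.1 := congrArg Prod.fst hpair
      have hp2 : (v p.2 : Fin t → F) = v p'.2 := congrArg Prod.snd hpair
      exact Prod.ext (v.injective hp1) (v.injective hp2)
    · intro e he1 het
      have key' : ∀ (M : Matrix (Fin (2 * t)) (Fin t) F), RowsIndep t M →
          ∀ b : Fin (2 * t) → F,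
          Fintype.card F ^ t * ∑ x : Fin t → F, (encF F (M.mulVec x + b)) ^ e
            = ∑ w : Fin (2 * t) → F, (encF F w) ^ e :=
        fun M hM b => key_sum e het M hM b
      have hrow : ∀ i, Fintype.card F ^ t
          * ∑ j, (encF F (L (v s) (v i) (v j))) ^ e
          = ∑ w : Fin (2 * t) → F, (encF F w) ^ e := by
        intro i
        rw [show ∑ j, (encF F (L (v s) (v i) (v j))) ^ e
            = ∑ y : Fin t → F,
              (encF F (E2.mulVec y + (E1.mulVec (v i) + E3.mulVec (v s)))) ^ e from by
          rw [← Equiv.sum_comp v (fun y =>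
            (encF F (E2.mulVec y + (E1.mulVec (v i) + E3.mulVec (v s)))) ^ e)]
          exact Finset.sum_congr rfl fun j _ => by rw [hL2]]
        exact key' E2 h2 _
      have hcol : ∀ j, Fintype.card F ^ t
          * ∑ i, (encF F (L (v s) (v i) (v j))) ^ e
          = ∑ w : Fin (2 * t) → F, (encF F w) ^ e := by
        intro j
        rw [show ∑ i, (encF F (L (v s) (v i) (v j))) ^ e
            = ∑ x : Fin t → F,
              (encF F (E1.mulVec x + (E2.mulVec (v j) + E3.mulVec (v s)))) ^ e from by
          rw [← Equiv.sum_comp v (fun x =>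
            (encF F (E1.mulVec x + (E2.mulVec (v j) + E3.mulVec (v s)))) ^ e)]
          exact Finset.sum_congr rfl fun i _ => by rw [hL1]]
        exact key' E1 h1 _
      have hdiag : Fintype.card F ^ t
          * ∑ i, (encF F (L (v s) (v i) (v i))) ^ e
          = ∑ w : Fin (2 * t) → F, (encF F w) ^ e := by
        rw [show ∑ i, (encF F (L (v s) (v i) (v i))) ^ e
            = ∑ x : Fin t → F,
              (encF F ((E1 + E2).mulVec x + E3.mulVec (v s))) ^ e from by
          rw [← Equiv.sum_comp v (fun x =>
            (encF F ((E1 + E2).mulVec x + E3.mulVec (v s))) ^ e)]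
          exact Finset.sum_congr rfl fun i _ => by rw [hLd]]
        exact key' (E1 + E2) h3 _
      have hback : Fintype.card F ^ t
          * ∑ i, (encF F (L (v s) (v i) (v (Fin.rev i)))) ^ e
          = ∑ w : Fin (2 * t) → F, (encF F w) ^ e := by
        rw [show ∑ i, (encF F (L (v s) (v i) (v (Fin.rev i)))) ^ e
            = ∑ x : Fin t → F,
              (encF F ((E1 - E2).mulVec x
                + (E2.mulVec C0 + E3.mulVec (v s)))) ^ e from by
          rw [← Equiv.sum_comp v (fun x =>
            (encF F ((E1 - E2).mulVec x + (E2.mulVec C0 + E3.mulVec (v s)))) ^ e)]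
          exact Finset.sum_congr rfl fun i _ => by rw [hv i, hLb]]
        exact key' (E1 - E2) h4 _
      refine ⟨∑ j, (encF F (L (v s) (v ⟨0, hN0⟩) (v j))) ^ e, ?_, ?_, ?_, ?_⟩
      · intro i; exact cancel _ _ (by rw [hrow i, hrow ⟨0, hN0⟩])
      · intro j; exact cancel _ _ (by rw [hcol j, hrow ⟨0, hN0⟩])
      · exact cancel _ _ (by rw [hdiag, hrow ⟨0, hN0⟩])
      · exact cancel _ _ (by rw [hback, hrow ⟨0, hN0⟩])
  · -- CMS rows
    intro i
    congr 1
    show (∑ s, ∑ j, (encF F (L (v s) (v i) (v j))) ^ (t + 1))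
        = ∑ k ∈ Finset.range ((Fintype.card F ^ t) ^ 2), k ^ (t + 1)
    set W' : Fin (Fintype.card F ^ t) → Fin (Fintype.card F ^ t) → ℕ :=
      fun a b => encF F (L (v a) (v i) (v b)) ^ (t + 1) with hW'
    have hbij : Function.Bijective
        (fun p : Fin (Fintype.card F ^ t) × Fin (Fintype.card F ^ t) =>
          L (v p.1) (v i) (v p.2)) := by
      have heq : (fun p : Fin (Fintype.card F ^ t) × Fin (Fintype.card F ^ t) =>
          L (v p.1) (v i) (v p.2))
          = (fun w => w + E1.mulVec (v i))
            ∘ ((fun p : (Fin t → F) × (Fin t → F) => E2.mulVec p.1 + E3.mulVec p.2)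
              ∘ (fun p => (v p.2, v p.1))) := by
        funext p
        simp only [Function.comp_apply, hL]
        abel
      rw [heq]
      exact (Equiv.addRight (E1.mulVec (v i))).bijective.comp
        (n3.comp ((v.prodCongr v).trans (Equiv.prodComm _ _)).bijective)
    calc (∑ a : Fin (Fintype.card F ^ t), ∑ b : Fin (Fintype.card F ^ t), W' a b)
        = ∑ p : Fin (Fintype.card F ^ t) × Fin (Fintype.card F ^ t), W' p.1 p.2 :=
          (Fintype.sum_prod_type' W').symm
      _ = ∑ w : Fin (2 * t) → F, encF F w ^ (t + 1) :=
          hbij.sum_comp (fun w => encF F w ^ (t + 1))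
      _ = _ := encTot (t + 1)
  · -- CMS columns
    intro j
    congr 1
    show (∑ s, ∑ i, (encF F (L (v s) (v i) (v j))) ^ (t + 1))
        = ∑ k ∈ Finset.range ((Fintype.card F ^ t) ^ 2), k ^ (t + 1)
    set W' : Fin (Fintype.card F ^ t) → Fin (Fintype.card F ^ t) → ℕ :=
      fun a b => encF F (L (v a) (v b) (v j)) ^ (t + 1) with hW'
    have hbij : Function.Bijective
        (fun p : Fin (Fintype.card F ^ t) × Fin (Fintype.card F ^ t) =>
          L (v p.1) (v p.2) (v j)) := by
      have heq : (fun p : Fin (Fintype.card F ^ t) × Fin (Fintype.card F ^ t) =>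
          L (v p.1) (v p.2) (v j))
          = (fun w => w + E2.mulVec (v j))
            ∘ ((fun p : (Fin t → F) × (Fin t → F) => E1.mulVec p.1 + E3.mulVec p.2)
              ∘ (fun p => (v p.2, v p.1))) := by
        funext p
        simp only [Function.comp_apply, hL]
        abel
      rw [heq]
      exact (Equiv.addRight (E2.mulVec (v j))).bijective.comp
        (n2.comp ((v.prodCongr v).trans (Equiv.prodComm _ _)).bijective)
    calc (∑ a : Fin (Fintype.card F ^ t), ∑ b : Fin (Fintype.card F ^ t), W' a b)
        = ∑ p : Fin (Fintype.card F ^ t) × Fin (Fintype.card F ^ t), W' p.1 p.2 :=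
          (Fintype.sum_prod_type' W').symm
      _ = ∑ w : Fin (2 * t) → F, encF F w ^ (t + 1) :=
          hbij.sum_comp (fun w => encF F w ^ (t + 1))
      _ = _ := encTot (t + 1)
  · -- CMS diagonal
    congr 1
    show (∑ s, ∑ i, (encF F (L (v s) (v i) (v i))) ^ (t + 1))
        = ∑ k ∈ Finset.range ((Fintype.card F ^ t) ^ 2), k ^ (t + 1)
    set W' : Fin (Fintype.card F ^ t) → Fin (Fintype.card F ^ t) → ℕ :=
      fun a b => encF F (L (v a) (v b) (v b)) ^ (t + 1) with hW'
    have hbij : Function.Bijective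
        (fun p : Fin (Fintype.card F ^ t) × Fin (Fintype.card F ^ t) =>
          L (v p.1) (v p.2) (v p.2)) := by
      have heq : (fun p : Fin (Fintype.card F ^ t) × Fin (Fintype.card F ^ t) =>
          L (v p.1) (v p.2) (v p.2))
          = ((fun p : (Fin t → F) × (Fin t → F) => (E1 + E2).mulVec p.1 + E3.mulVec p.2)
              ∘ (fun p => (v p.2, v p.1))) := by
        funext p
        simp only [Function.comp_apply, hL, Matrix.add_mulVec]
        try abel
      rw [heq]
      exact n4.comp ((v.prodCongr v).trans (Equiv.prodComm _ _)).bijective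
    calc (∑ a : Fin (Fintype.card F ^ t), ∑ b : Fin (Fintype.card F ^ t), W' a b)
        = ∑ p : Fin (Fintype.card F ^ t) × Fin (Fintype.card F ^ t), W' p.1 p.2 :=
          (Fintype.sum_prod_type' W').symm
      _ = ∑ w : Fin (2 * t) → F, encF F w ^ (t + 1) :=
          hbij.sum_comp (fun w => encF F w ^ (t + 1))
      _ = _ := encTot (t + 1)
  · -- CMS back diagonal
    congr 1
    show (∑ s, ∑ i, (encF F (L (v s) (v i) (v (Fin.rev i)))) ^ (t + 1))
        = ∑ k ∈ Finset.range ((Fintype.card F ^ t) ^ 2), k ^ (t + 1)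
    set W' : Fin (Fintype.card F ^ t) → Fin (Fintype.card F ^ t) → ℕ :=
      fun a b => encF F (L (v a) (v b) (v (Fin.rev b)))  ^ (t + 1) with hW'
    have hbij : Function.Bijective
        (fun p : Fin (Fintype.card F ^ t) × Fin (Fintype.card F ^ t) =>
          L (v p.1) (v p.2) (v (Fin.rev p.2))) := by
      have heq : (fun p : Fin (Fintype.card F ^ t) × Fin (Fintype.card F ^ t) =>
          L (v p.1) (v p.2) (v (Fin.rev p.2)))
          = (fun w => w + E2.mulVec C0)
            ∘ ((fun p : (Fin t → F) × (Fin t → F) => (E1 - E2).mulVec p.1 + E3.mulVec p.2)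
              ∘ (fun p => (v p.2, v p.1))) := by
        funext p
        simp only [Function.comp_apply, hv, hL, Matrix.sub_mulVec, Matrix.mulVec_sub]
        try abel
      rw [heq]
      exact (Equiv.addRight (E2.mulVec C0)).bijective.comp
        (n5.comp ((v.prodCongr v).trans (Equiv.prodComm _ _)).bijective)
    calc (∑ a : Fin (Fintype.card F ^ t), ∑ b : Fin (Fintype.card F ^ t), W' a b)
        = ∑ p : Fin (Fintype.card F ^ t) × Fin (Fintype.card F ^ t), W' p.1 p.2 :=
          (Fintype.sum_prod_type' W').symm
      _ = ∑ w : Fin (2 * t) → F, encF F w ^ (t + 1) :=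
          hbij.sum_comp (fun w => encF F w ^ (t + 1))
      _ = _ := encTot (t + 1)
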